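/- Let q be a prime power, p₁,…,p_s distinct odd primes not dividing q, e₁,…,e_s positive integers, and n = p₁^{e₁}···p_s^{e_s}. Then the number of q-cyclotomic cosets modulo n equals the sum over all tuples (y₁,…,y_s) with 0 ≤ y_i ≤ e_i of φ(p₁^{e₁−y₁})···φ(p_s^{e_s−y_s}) / lcm(f_{1,y₁},…,f_{s,y_s}), where f_{i,y_i} is the multiplicative order of q modulo p_i^{e_i−y_i}. -/

import Mathlib

/-- The `q`-cyclotomic coset modulo `n` containing `γ`. -/
def cycCoset (q n : ℕ) (γ : ZMod n) : Set (ZMod n) := {x | ∃ j : ℕ, x = γ * (q : ZMod n) ^ j}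



-- modEq w.r.t. a product of pairwise coprime moduli
lemma modEq_prod_iff {ι : Type*} (t : Finset ι) (m : ι → ℕ)
    (hco : ∀ i ∈ t, ∀ j ∈ t, i ≠ j → Nat.Coprime (m i) (m j)) (a b : ℕ) :
    a ≡ b [MOD ∏ i ∈ t, m i] ↔ ∀ i ∈ t, a ≡ b [MOD m i] := by
  classical
  induction t using Finset.induction_on with
  | empty => simp [Nat.modEq_one]
  | @insert x t hx ih =>
    rw [Finset.prod_insert hx]
    have hcop : Nat.Coprime (m x) (∏ i ∈ t, m i) :=
      Nat.Coprime.prod_right fun i hi =>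
        hco x (Finset.mem_insert_self x t) i (Finset.mem_insert_of_mem hi)
          (fun h => hx (h ▸ hi))
    rw [← Nat.modEq_and_modEq_iff_modEq_mul hcop,
      ih (fun i hi j hj hij => hco i (Finset.mem_insert_of_mem hi) j (Finset.mem_insert_of_mem hj) hij)]
    simp [Finset.forall_mem_insert]

lemma pow_natCast_eq_one_iff (q k M : ℕ) :
    (q : ZMod M) ^ k = 1 ↔ q ^ k ≡ 1 [MOD M] := by
  rw [← Nat.cast_pow, ← Nat.cast_one (R := ZMod M), ZMod.natCast_eq_natCast_iff]

lemma orderOf_zmod_prod {ι : Type*} (q : ℕ) (t : Finset ι) (m : ι → ℕ)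
    (hco : ∀ i ∈ t, ∀ j ∈ t, i ≠ j → Nat.Coprime (m i) (m j)) :
    orderOf (q : ZMod (∏ i ∈ t, m i)) = t.lcm fun i => orderOf (q : ZMod (m i)) := by
  have key : ∀ k : ℕ, orderOf (q : ZMod (∏ i ∈ t, m i)) ∣ k ↔ (t.lcm fun i => orderOf (q : ZMod (m i))) ∣ k := by
    intro k
    rw [orderOf_dvd_iff_pow_eq_one, pow_natCast_eq_one_iff, modEq_prod_iff t m hco,
      Finset.lcm_dvd_iff]
    constructor
    · intro h i hi
      rw [orderOf_dvd_iff_pow_eq_one, pow_natCast_eq_one_iff]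
      exact h i hi
    · intro h i hi
      rw [← pow_natCast_eq_one_iff, ← orderOf_dvd_iff_pow_eq_one]
      exact h i hi
  exact Nat.dvd_antisymm ((key _).mpr dvd_rfl) ((key _).mp dvd_rfl)

lemma totient_prod {ι : Type*} (t : Finset ι) (m : ι → ℕ)
    (hco : ∀ i ∈ t, ∀ j ∈ t, i ≠ j → Nat.Coprime (m i) (m j)) :
    Nat.totient (∏ i ∈ t, m i) = ∏ i ∈ t, Nat.totient (m i) := by
  classical
  induction t using Finset.induction_on with
  | empty => simp
  | @insert x t hx ih =>
    have hcop : Nat.Coprime (m x) (∏ i ∈ t, m i) :=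
      Nat.Coprime.prod_right fun i hi =>
        hco x (Finset.mem_insert_self x t) i (Finset.mem_insert_of_mem hi)
          (fun h => hx (h ▸ hi))
    rw [Finset.prod_insert hx, Finset.prod_insert hx, Nat.totient_mul hcop,
      ih (fun i hi j hj hij => hco i (Finset.mem_insert_of_mem hi) j (Finset.mem_insert_of_mem hj) hij)]

lemma card_range_of_modEq {α : Type*} (f : ℕ → α) (m : ℕ) (hm : 0 < m)
    (h : ∀ j k, f j = f k ↔ j ≡ k [MOD m]) : Nat.card (Set.range f) = m := by
  haveI : NeZero m := ⟨hm.ne'⟩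
  have : Function.Bijective (fun a : ZMod m => (⟨f a.val, Set.mem_range_self _⟩ : Set.range f)) := by
    constructor
    · intro a b hab
      have := (h _ _).mp (Subtype.ext_iff.mp hab)
      have := Nat.ModEq.eq_of_lt_of_lt this (ZMod.val_lt a) (ZMod.val_lt b)
      exact ZMod.val_injective m this
    · rintro ⟨x, j, rfl⟩
      refine ⟨(j : ZMod m), Subtype.ext ?_⟩
      show f ((j : ZMod m)).val = f j
      rw [h]
      rw [ZMod.val_natCast]
      exact Nat.mod_modEq j m
  calc Nat.card (Set.range f) = Nat.card (ZMod m) := (Nat.card_congr (Equiv.ofBijective _ this)).symm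
    _ = m := Nat.card_zmod m



section Cosets
variable (q n : ℕ) [NeZero n] (hco : Nat.Coprime q n)

lemma orderOf_q_pos {d : ℕ} (hd : d ≠ 0) (hcd : Nat.Coprime q d) :
    0 < orderOf (q : ZMod d) := by
  haveI : NeZero d := ⟨hd⟩
  have : (↑(ZMod.unitOfCoprime q hcd) : ZMod d) = (q : ZMod d) := ZMod.coe_unitOfCoprime q hcd
  rw [← this, orderOf_units]
  exact orderOf_pos _

include hco in
lemma coset_eq_iff (x : ZMod n) (j k : ℕ) :
    x * (q : ZMod n) ^ j = x * (q : ZMod n) ^ k ↔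
      j ≡ k [MOD orderOf (q : ZMod (addOrderOf x))] := by
  set d := addOrderOf x with hd
  have hdvd : d ∣ n := by
    have := addOrderOf_dvd_card (x := x)
    rwa [ZMod.card] at this
  have hqd : Nat.Coprime q d := Nat.Coprime.coprime_dvd_right hdvd hco
  have hmul : ∀ a : ℕ, x * (q : ZMod n) ^ a = (q ^ a) • x := by
    intro a
    rw [← Nat.cast_pow, nsmul_eq_mul, mul_comm]
  rw [hmul, hmul, nsmul_eq_nsmul_iff_modEq, ← hd]
  rw [← ZMod.natCast_eq_natCast_iff, Nat.cast_pow, Nat.cast_pow]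
  have hu : (↑(ZMod.unitOfCoprime q hqd) : ZMod d) = (q : ZMod d) := ZMod.coe_unitOfCoprime q hqd
  rw [← hu, ← Units.val_pow_eq_pow_val, ← Units.val_pow_eq_pow_val, orderOf_units]
  exact ⟨fun h => pow_eq_pow_iff_modEq.mp (Units.ext h),
    fun h => congrArg Units.val (pow_eq_pow_iff_modEq.mpr h)⟩

include hco in
lemma card_cycCoset (x : ZMod n) :
    Nat.card (cycCoset q n x) = orderOf (q : ZMod (addOrderOf x)) := by
  have hset : cycCoset q n x = Set.range (fun j : ℕ => x * (q : ZMod n) ^ j) := by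
    ext y; exact ⟨fun ⟨j, hj⟩ => ⟨j, hj.symm⟩, fun ⟨j, hj⟩ => ⟨j, hj.symm⟩⟩
  have hdvd : addOrderOf x ∣ n := by
    have := addOrderOf_dvd_card (x := x)
    rwa [ZMod.card] at this
  have hqd : Nat.Coprime q (addOrderOf x) := Nat.Coprime.coprime_dvd_right hdvd hco
  have hd0 : addOrderOf x ≠ 0 := (addOrderOf_pos x).ne'
  rw [hset]
  exact card_range_of_modEq _ _ (orderOf_q_pos q hd0 hqd) (coset_eq_iff q n hco x)

-- membership implies coset equality
include hco in
lemma cycCoset_eq_of_mem {a b : ZMod n} (h : b ∈ cycCoset q n a) :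
    cycCoset q n b = cycCoset q n a := by
  obtain ⟨j, rfl⟩ := h
  have hq1 : (q : ZMod n) ^ orderOf (q : ZMod n) = 1 := pow_orderOf_eq_one _
  have hmpos : 0 < orderOf (q : ZMod n) :=
    orderOf_q_pos q (NeZero.ne n) hco
  set m := orderOf (q : ZMod n) with hm
  ext y
  constructor
  · rintro ⟨k, rfl⟩
    exact ⟨j + k, by rw [pow_add, mul_assoc]⟩
  · rintro ⟨k, rfl⟩
    refine ⟨j * (m - 1) + k, ?_⟩
    have h2 : j * (m - 1) + j = m * j := by
      rw [← Nat.mul_succ, Nat.succ_eq_add_one, Nat.sub_add_cancel hmpos, mul_comm]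
    have hexp : j + (j * (m - 1) + k) = m * j + k := by rw [← h2]; ring
    rw [mul_assoc, ← pow_add, hexp, pow_add, pow_mul, hq1, one_pow, one_mul]

include hco in
lemma addOrderOf_eq_of_coset_eq {a b : ZMod n} (h : cycCoset q n a = cycCoset q n b) :
    addOrderOf a = addOrderOf b := by
  have hb : a ∈ cycCoset q n b := h ▸ ⟨0, by simp⟩
  obtain ⟨j, rfl⟩ := hb
  have hunit : IsUnit ((q : ZMod n) ^ j) := by
    have : IsUnit (q : ZMod n) := ⟨ZMod.unitOfCoprime q hco, ZMod.coe_unitOfCoprime q hco⟩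
    exact this.pow j
  have : addOrderOf ((AddMonoidHom.mulRight ((q : ZMod n) ^ j)) b) = addOrderOf b :=
    addOrderOf_injective _ (fun y z hyz => hunit.mul_left_cancel (by
      simpa [AddMonoidHom.mulRight_apply, mul_comm] using hyz)) b
  simpa [AddMonoidHom.mulRight_apply] using this

end Cosets
def cycSetoid (q n : ℕ) : Setoid (ZMod n) :=
  ⟨fun a b => cycCoset q n a = cycCoset q n b, ⟨fun _ => rfl, Eq.symm, Eq.trans⟩⟩

lemma count_orbits (q n : ℕ) [NeZero n] (hco : Nat.Coprime q n) :
    Nat.card {S : Set (ZMod n) // ∃ γ : ZMod n, S = cycCoset q n γ} =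
      ∑ d ∈ n.divisors, Nat.totient d / orderOf (q : ZMod d) := by
  classical
  set r := cycSetoid q n with hr
  -- the quotient
  let Q := Quotient r
  haveI : Fintype Q := Fintype.ofFinite Q
  -- the subtype of cosets is equivalent to the quotient
  have hQ : Nat.card {S : Set (ZMod n) // ∃ γ : ZMod n, S = cycCoset q n γ} = Nat.card Q := by
    refine (Nat.card_congr (Equiv.ofBijective
      (Quotient.lift (fun x : ZMod n => (⟨cycCoset q n x, x, rfl⟩ :
        {S : Set (ZMod n) // ∃ γ : ZMod n, S = cycCoset q n γ}))
        (fun a b h => Subtype.ext h)) ⟨?_, ?_⟩)).symm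
    · intro a b
      induction a using Quotient.ind
      induction b using Quotient.ind
      intro h
      exact Quotient.sound (Subtype.ext_iff.mp h)
    · rintro ⟨S, γ, rfl⟩
      exact ⟨Quotient.mk r γ, rfl⟩
  rw [hQ, Nat.card_eq_fintype_card]
  -- the additive order is constant on classes
  let ad : Q → ℕ := Quotient.lift addOrderOf (fun a b h => addOrderOf_eq_of_coset_eq q n hco h)
  have had : ∀ x : ZMod n, ad (Quotient.mk r x) = addOrderOf x := fun _ => rfl
  have hmemdiv : ∀ ω : Q, ad ω ∈ n.divisors := by
    intro ω
    induction ω using Quotient.ind with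
    | _ x =>
      rw [had, Nat.mem_divisors]
      refine ⟨?_, NeZero.ne n⟩
      have := addOrderOf_dvd_card (x := x)
      rwa [ZMod.card] at this
  rw [← Finset.card_univ, Finset.card_eq_sum_card_fiberwise (f := ad) (t := n.divisors)
    (fun ω _ => hmemdiv ω)]
  refine Finset.sum_congr rfl ?_
  intro d hd
  obtain ⟨hddvd, -⟩ := Nat.mem_divisors.mp hd
  set c := orderOf (q : ZMod d) with hc
  have hd0 : d ≠ 0 := fun h => by
    subst h
    exact absurd (Nat.eq_zero_of_zero_dvd hddvd) (NeZero.ne n)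
  have hcpos : 0 < c := orderOf_q_pos q hd0 (Nat.Coprime.coprime_dvd_right hddvd hco)
  -- count elements of additive order d fiberwise over classes
  have hTcard : (Finset.univ.filter fun x : ZMod n => addOrderOf x = d).card = Nat.totient d := by
    have hdvd' : d ∣ Fintype.card (ZMod n) := by rwa [ZMod.card]
    exact IsAddCyclic.card_addOrderOf_eq_totient hdvd'
  have hfib : (Finset.univ.filter fun x : ZMod n => addOrderOf x = d).card =
      ∑ ω ∈ Finset.univ.filter (fun ω : Q => ad ω = d),
        ((Finset.univ.filter fun x : ZMod n => addOrderOf x = d).filter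
          (fun x => Quotient.mk r x = ω)).card := by
    refine Finset.card_eq_sum_card_fiberwise ?_
    intro x hx
    rw [Finset.mem_coe, Finset.mem_filter] at hx ⊢
    exact ⟨Finset.mem_univ _, hx.2 ▸ had x⟩
  have hfibcard : ∀ ω ∈ Finset.univ.filter (fun ω : Q => ad ω = d),
      ((Finset.univ.filter fun x : ZMod n => addOrderOf x = d).filter
        (fun x => Quotient.mk r x = ω)).card = c := by
    intro ω hω
    obtain ⟨x₀, rfl⟩ := Quotient.exists_rep ω
    rw [Finset.mem_filter, had] at hω
    have hx₀ : addOrderOf x₀ = d := hω.2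
    have hsetfin : ((cycCoset q n x₀).toFinset : Finset (ZMod n)).card = c := by
      rw [Set.toFinset_card, ← Nat.card_eq_fintype_card, card_cycCoset q n hco, hx₀]
    rw [← hsetfin]
    congr 1
    ext x
    simp only [Finset.mem_filter, Finset.mem_univ, true_and, Set.mem_toFinset]
    constructor
    · rintro ⟨-, hx⟩
      have : cycCoset q n x = cycCoset q n x₀ := Quotient.exact hx
      exact this ▸ ⟨0, by simp⟩
    · intro hx
      have hcc : cycCoset q n x = cycCoset q n x₀ := cycCoset_eq_of_mem q n hco hx
      exact ⟨(addOrderOf_eq_of_coset_eq q n hco hcc).trans hx₀, Quotient.sound hcc⟩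
  rw [hfib, Finset.sum_congr rfl hfibcard, Finset.sum_const, smul_eq_mul] at hTcard
  rw [← hTcard, Nat.mul_div_cancel _ hcpos]
section Final

variable {s : ℕ} {p : Fin s → ℕ} (hp : ∀ i, (p i).Prime) (hdist : ∀ i j, i ≠ j → p i ≠ p j)

include hp hdist in
lemma fact_eval (k : Fin s → ℕ) (j : Fin s) :
    (∏ i, p i ^ k i).factorization (p j) = k j := by
  rw [Nat.factorization_prod (fun i _ => pow_ne_zero _ (hp i).ne_zero)]
  rw [Finsupp.finset_sum_apply]
  rw [Finset.sum_eq_single j]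
  · rw [(hp j).factorization_pow, Finsupp.single_apply, if_pos rfl]
  · intro i _ hij
    rw [(hp i).factorization_pow, Finsupp.single_apply, if_neg (hdist i j hij)]
  · intro h
    exact absurd (Finset.mem_univ j) h

include hp hdist in
lemma dvd_eq_prod {N : ℕ} (hN : N = ∏ i, p i ^ (E : Fin s → ℕ) i) {d : ℕ} (hd : d ∣ N)
    (hd0 : d ≠ 0) : d = ∏ i, p i ^ (d.factorization (p i)) := by
  have hsupp : d.factorization.support ⊆ Finset.univ.image p := by
    intro r hr
    rw [Nat.support_factorization] at hr
    have hrp : r.Prime := Nat.prime_of_mem_primeFactors hr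
    have hrd : r ∣ d := Nat.dvd_of_mem_primeFactors hr
    have hrN : r ∣ N := hrd.trans hd
    rw [hN] at hrN
    obtain ⟨i, -, hi⟩ := hrp.prime.exists_mem_finset_dvd hrN
    have : r = p i := (Nat.prime_dvd_prime_iff_eq hrp (hp i)).mp (hrp.dvd_of_dvd_pow hi)
    exact Finset.mem_image.mpr ⟨i, Finset.mem_univ i, this.symm⟩
  conv_lhs => rw [← Nat.factorization_prod_pow_eq_self hd0]
  rw [Finsupp.prod]
  rw [Finset.prod_subset hsupp (fun r _ hr => by
    rw [Finsupp.notMem_support_iff.mp hr, pow_zero])]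
  rw [Finset.prod_image (fun i _ j _ hij => by
    by_contra hne
    exact hdist i j hne hij)]

end Final
lemma orderOf_cast_congr (q : ℕ) {M N : ℕ} (h : M = N) :
    orderOf ((q : ZMod M)) = orderOf ((q : ZMod N)) := by subst h; rfl


/-- Counting `q`-cyclotomic cosets modulo `n = p₁^{e₁} ⋯ p_s^{e_s}`: their number equals
`∑_{0 ≤ y_i ≤ e_i} φ(p₁^{e₁-y₁}) ⋯ φ(p_s^{e_s-y_s}) / lcm(f_{1,y₁}, …, f_{s,y_s})`,
where `f_{i,y_i}` is the multiplicative order of `q` modulo `p_i^{e_i - y_i}`. -/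
theorem stmt10 (q : ℕ) (hq : IsPrimePow q) (s : ℕ) (p e : Fin s → ℕ)
    (hp : ∀ i, (p i).Prime) (hpodd : ∀ i, Odd (p i)) (hpq : ∀ i, ¬ (p i ∣ q))
    (hdist : ∀ i j, i ≠ j → p i ≠ p j) (he : ∀ i, 0 < e i)
    (n : ℕ) (hn : n = ∏ i, (p i) ^ (e i)) :
    Nat.card {S : Set (ZMod n) // ∃ γ : ZMod n, S = cycCoset q n γ} =
      ∑ y ∈ (Finset.univ : Finset (∀ i : Fin s, Fin (e i + 1))),
        (∏ i, Nat.totient ((p i) ^ (e i - (y i : ℕ)))) /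
          (Finset.univ.lcm fun i => orderOf ((q : ZMod ((p i) ^ (e i - (y i : ℕ)))))) := by
  classical
  obtain ⟨r, kq, hrP, hkq, hqeq⟩ := hq
  have hrprime : r.Prime := Nat.prime_iff.mpr hrP
  have hco : Nat.Coprime q n := by
    rw [hn]
    apply Nat.Coprime.prod_right
    intro i _
    have hne : r ≠ p i := by
      rintro rfl
      exact hpq i (hqeq ▸ dvd_pow_self (p i) hkq.ne')
    have hcri : Nat.Coprime r (p i) := (Nat.coprime_primes hrprime (hp i)).mpr hne
    rw [← hqeq]
    exact Nat.Coprime.pow _ _ hcri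
  have hn0 : n ≠ 0 := by
    rw [hn]
    exact (Finset.prod_pos fun i _ => pow_pos (hp i).pos _).ne'
  haveI : NeZero n := ⟨hn0⟩
  have hcop2 : ∀ (a : Fin s → ℕ), ∀ i ∈ (Finset.univ : Finset (Fin s)), ∀ j ∈ (Finset.univ : Finset (Fin s)),
      i ≠ j → Nat.Coprime (p i ^ a i) (p j ^ a j) :=
    fun a i _ j _ hij => Nat.Coprime.pow _ _ ((Nat.coprime_primes (hp i) (hp j)).mpr (hdist i j hij))
  rw [count_orbits q n hco]
  refine Finset.sum_nbij'
    (i := fun d => fun i : Fin s => (⟨e i - d.factorization (p i),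
      Nat.lt_succ_of_le (Nat.sub_le _ _)⟩ : Fin (e i + 1)))
    (j := fun y => ∏ i, p i ^ (e i - (y i : ℕ)))
    (fun d _ => Finset.mem_univ _)
    (fun y _ => Nat.mem_divisors.mpr ⟨hn ▸ Finset.prod_dvd_prod_of_dvd _ _
      (fun i _ => pow_dvd_pow (p i) (Nat.sub_le _ _)), hn0⟩)
    ?_ ?_ ?_
  · -- left inverse : divisors → divisors
    intro d hd
    obtain ⟨hdvd, -⟩ := Nat.mem_divisors.mp hd
    have hd0 : d ≠ 0 := fun h => hn0 (Nat.eq_zero_of_zero_dvd (h ▸ hdvd))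
    have hk : ∀ i, d.factorization (p i) ≤ e i := by
      intro i
      have hfle : d.factorization ≤ n.factorization :=
        (Nat.factorization_le_iff_dvd hd0 hn0).mpr hdvd
      have := hfle (p i)
      rwa [hn, fact_eval hp hdist e i] at this
    calc (∏ i, p i ^ (e i - (e i - d.factorization (p i))))
        = ∏ i, p i ^ (d.factorization (p i)) := by
          refine Finset.prod_congr rfl fun i _ => ?_
          rw [Nat.sub_sub_self (hk i)]
      _ = d := (dvd_eq_prod hp hdist hn hdvd hd0).symm
  · -- right inverse : tuples → tuples
    intro y _
    funext i
    apply Fin.ext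
    show e i - (∏ i', p i' ^ (e i' - (y i' : ℕ))).factorization (p i) = (y i : ℕ)
    rw [fact_eval hp hdist (fun i' => e i' - (y i' : ℕ)) i]
    exact Nat.sub_sub_self (Nat.lt_succ_iff.mp (y i).isLt)
  · -- summands agree
    intro d hd
    obtain ⟨hdvd, -⟩ := Nat.mem_divisors.mp hd
    have hd0 : d ≠ 0 := fun h => hn0 (Nat.eq_zero_of_zero_dvd (h ▸ hdvd))
    have hk : ∀ i, d.factorization (p i) ≤ e i := by
      intro i
      have hfle : d.factorization ≤ n.factorization :=
        (Nat.factorization_le_iff_dvd hd0 hn0).mpr hdvd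
      have := hfle (p i)
      rwa [hn, fact_eval hp hdist e i] at this
    have hkeq : ∀ i : Fin s, e i - (e i - d.factorization (p i)) = d.factorization (p i) :=
      fun i => Nat.sub_sub_self (hk i)
    have hdeq : d = ∏ i, p i ^ (d.factorization (p i)) := dvd_eq_prod hp hdist hn hdvd hd0
    simp only [hkeq]
    conv_lhs => rw [hdeq]
    rw [totient_prod _ _ (hcop2 _), orderOf_zmod_prod q _ _ (hcop2 _)]
    congr 1
    refine Finset.lcm_congr rfl fun i _ => ?_
    exact orderOf_cast_congr q (by rw [hkeq i])
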